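/- Fix n a power of 2 and let g' be the function on [0,1]² with Haar coefficients g'_{I×J} = |I×J|^{1/2} for dyadic squares with 0 ≤ i(I), i(J) < n (where i(I) = −log₂|I|, I ⊆ [0,1]) and 0 otherwise. Then the dyadic product BMO norm of g' is exactly n: ‖g'‖_{BMO_d(ℝ⊗ℝ)} = n. In particular, taking Ω = (0,1)², (|Ω|^{-1} Σ_{R⊆Ω} (g'_R)²)^{1/2} = n. -/

import Mathlib

open MeasureTheory Set
open scoped ENNReal Classical

noncomputable section

/-- The dyadic interval `[n·2^k, (n+1)·2^k)`, indexed by `p = (k, n)`. -/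
def dyadicI (p : ℤ × ℤ) : Set ℝ := Set.Ico ((p.2 : ℝ) * 2 ^ p.1) ((p.2 + 1 : ℝ) * 2 ^ p.1)

/-- The length `|I| = 2^k` of the dyadic interval indexed by `p = (k, n)`. -/
def dlen (p : ℤ × ℤ) : ℝ := (2 : ℝ) ^ p.1

/-- The `L²`-normalized Haar function of the dyadic interval indexed by `p = (k, n)`. -/
def haar (p : ℤ × ℤ) (x : ℝ) : ℝ :=
  (2 : ℝ) ^ (-(p.1 : ℝ) / 2) *
    ((dyadicI (p.1 - 1, 2 * p.2)).indicator 1 x - (dyadicI (p.1 - 1, 2 * p.2 + 1)).indicator 1 x)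

/-- The normalized indicator `χ_I/|I|`. -/
def nind (p : ℤ × ℤ) (x : ℝ) : ℝ := (dlen p)⁻¹ * (dyadicI p).indicator 1 x

/-- Index of a dyadic rectangle `R = I × J`. -/
abbrev RectIx : Type := (ℤ × ℤ) × (ℤ × ℤ)

/-- The dyadic rectangle `I × J`. -/
def dyadicR (r : RectIx) : Set (ℝ × ℝ) := (dyadicI r.1) ×ˢ (dyadicI r.2)

/-- The area `|R| = |I|·|J|`. -/
def rlen (r : RectIx) : ℝ := dlen r.1 * dlen r.2

/-- The rectangular Haar function `h_R = h_I ⊗ h_J`. -/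
def haarR (r : RectIx) (z : ℝ × ℝ) : ℝ := haar r.1 z.1 * haar r.2 z.2

/-- The rectangular Haar coefficient `f_R = ⟨f, h_R⟩`. -/
def haarCoefR (f : ℝ × ℝ → ℝ) (r : RectIx) : ℝ := ∫ z : ℝ × ℝ, f z * haarR r z

/-- The average of `g` over the dyadic rectangle `R`. -/
def avgR (g : ℝ × ℝ → ℝ) (r : RectIx) : ℝ := (rlen r)⁻¹ * ∫ z in dyadicR r, g z

/-- The average of `u` over the dyadic interval `I`. -/
def avgI (u : ℝ → ℝ) (p : ℤ × ℤ) : ℝ := (dlen p)⁻¹ * ∫ x in dyadicI p, u x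

/-- The Haar coefficient in the second variable, `f_J(x) = ⟨f(x,·), h_J⟩`. -/
def coefSnd (f : ℝ × ℝ → ℝ) (q : ℤ × ℤ) (x : ℝ) : ℝ := ∫ y : ℝ, f (x, y) * haar q y

/-- The Haar coefficient in the first variable, `f_I(y) = ⟨f(·,y), h_I⟩`. -/
def coefFst (f : ℝ × ℝ → ℝ) (p : ℤ × ℤ) (y : ℝ) : ℝ := ∫ x : ℝ, f (x, y) * haar p x

/-- The bi-parameter dyadic square function. -/
def sqR (f : ℝ × ℝ → ℝ) (z : ℝ × ℝ) : ℝ :=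
  Real.sqrt (∑' r : RectIx, (haarCoefR f r) ^ 2 * (rlen r)⁻¹ * (dyadicR r).indicator 1 z)

/-- The strong dyadic maximal function. -/
def strongMax (g : ℝ × ℝ → ℝ) (z : ℝ × ℝ) : ℝ :=
  ⨆ r : {r : RectIx // z ∈ dyadicR r}, |avgR g r.1|

/-- The one-parameter dyadic maximal function. -/
def dyadMax (u : ℝ → ℝ) (x : ℝ) : ℝ := ⨆ p : {p : ℤ × ℤ // x ∈ dyadicI p}, |avgI u p.1|

/-- `f` is a finite linear combination of indicators of dyadic intervals. -/
def IsDyadicSimple (f : ℝ → ℝ) : Prop :=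
  ∃ (s : Finset (ℤ × ℤ)) (c : ℤ × ℤ → ℝ),
    f = fun x => ∑ p ∈ s, c p * (dyadicI p).indicator 1 x

/-- `g` is a finite linear combination of indicators of dyadic rectangles. -/
def IsDyadicSimple2 (g : ℝ × ℝ → ℝ) : Prop :=
  ∃ (s : Finset RectIx) (c : RectIx → ℝ),
    g = fun z => ∑ r ∈ s, c r * (dyadicR r).indicator 1 z

/-- `f` is a finite linear combination of rectangular Haar functions. -/
def FinHaar2 (f : ℝ × ℝ → ℝ) : Prop :=
  ∃ (s : Finset RectIx) (c : RectIx → ℝ), f = fun z => ∑ r ∈ s, c r * haarR r z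

/-- The paraproduct `π²_g(f) = Σ_R f_R ⟨g⟩_R h_R`. -/
def pi2 (g f : ℝ × ℝ → ℝ) (z : ℝ × ℝ) : ℝ :=
  ∑' r : RectIx, haarCoefR f r * avgR g r * haarR r z

/-- The mixed paraproduct `π³_g(f) = Σ_{I,J} ⟨f_J⟩_I ⟨g_I⟩_J h_I ⊗ h_J`. -/
def pi3 (g f : ℝ × ℝ → ℝ) (z : ℝ × ℝ) : ℝ :=
  ∑' r : RectIx, avgI (coefSnd f r.2) r.1 * avgI (coefFst g r.1) r.2 * haarR r z

/-- The mixed paraproduct `π⁴_g(f) = Σ_{I,J} ⟨f_J⟩_I g_{I×J} h_I ⊗ χ̄_J`. -/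
def pi4 (g f : ℝ × ℝ → ℝ) (z : ℝ × ℝ) : ℝ :=
  ∑' r : RectIx, avgI (coefSnd f r.2) r.1 * haarCoefR g r * haar r.1 z.1 * nind r.2 z.2

/-- The mixed square-maximal operator `S₂M₁`. -/
def S2M1 (f : ℝ × ℝ → ℝ) (z : ℝ × ℝ) : ℝ :=
  Real.sqrt (∑' q : ℤ × ℤ,
    (dyadMax (coefSnd f q) z.1) ^ 2 * (dlen q)⁻¹ * (dyadicI q).indicator 1 z.2)

/-- The mixed maximal-square operator `M₂S₁`. -/
def M2S1 (g : ℝ × ℝ → ℝ) (z : ℝ × ℝ) : ℝ :=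
  ⨆ q : {q : ℤ × ℤ // z.2 ∈ dyadicI q},
    Real.sqrt (∑' p : ℤ × ℤ,
      (avgI (coefFst g p) q.1) ^ 2 * (dlen p)⁻¹ * (dyadicI p).indicator 1 z.1)

/-- The mixed maximal-square operator `M₁S₂`. -/
def M1S2 (f : ℝ × ℝ → ℝ) (z : ℝ × ℝ) : ℝ :=
  ⨆ p : {p : ℤ × ℤ // z.1 ∈ dyadicI p},
    Real.sqrt (∑' q : ℤ × ℤ,
      (avgI (coefSnd f q) p.1) ^ 2 * (dlen q)⁻¹ * (dyadicI q).indicator 1 z.2)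

/-- The `H^p_d(ℝ⊗ℝ)` quasi-norm `‖M(f)‖_{L^p}`. -/
def hpNorm (p : ℝ) (f : ℝ × ℝ → ℝ) : ℝ≥0∞ :=
  eLpNorm (strongMax f) (ENNReal.ofReal p) volume


/-- The Haar coefficients of the example function: `g'_{I×J} = |I×J|^{1/2}` for dyadic
squares `I×J ⊆ [0,1)²` with generations `0 ≤ i(I), i(J) < n`, and `0` otherwise. -/
def exCoef (n : ℕ) (r : RectIx) : ℝ :=
  if -(n : ℤ) < r.1.1 ∧ r.1.1 ≤ 0 ∧ 0 ≤ r.1.2 ∧ r.1.2 < 2 ^ (-r.1.1).toNat ∧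
     -(n : ℤ) < r.2.1 ∧ r.2.1 ≤ 0 ∧ 0 ≤ r.2.2 ∧ r.2.2 < 2 ^ (-r.2.1).toNat
  then Real.sqrt (rlen r) else 0

/-- The example function `g'` of Statement 15. -/
def exFun (n : ℕ) (z : ℝ × ℝ) : ℝ := ∑' r : RectIx, exCoef n r * haarR r z

/-- The dyadic product BMO norm `sup_Ω (|Ω|⁻¹ Σ_{R⊆Ω} g_R²)^{1/2}`, the supremum being over
open sets of finite positive measure. -/
def bmoProd (g : ℝ × ℝ → ℝ) : ℝ :=
  ⨆ Ω : {Ω : Set (ℝ × ℝ) // IsOpen Ω ∧ 0 < volume Ω ∧ volume Ω < ⊤},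
    Real.sqrt ((volume Ω.1).toReal⁻¹ *
      ∑' r : {r : RectIx // dyadicR r ⊆ Ω.1}, (haarCoefR g r.1) ^ 2)

lemma two_zpow_pos (k : ℤ) : (0:ℝ) < 2 ^ k := zpow_pos two_pos k

lemma measurableSet_dyadicI (p : ℤ × ℤ) : MeasurableSet (dyadicI p) := measurableSet_Ico

lemma volume_dyadicI (p : ℤ × ℤ) : volume (dyadicI p) = ENNReal.ofReal ((2:ℝ) ^ p.1) := by
  rw [dyadicI, Real.volume_Ico]
  congr 1; ring

lemma dyadicI_disjoint {k m m' : ℤ} (h : m ≠ m') :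
    Disjoint (dyadicI (k, m)) (dyadicI (k, m')) := by
  rw [dyadicI, dyadicI, Set.Ico_disjoint_Ico]
  rcases h.lt_or_gt with hlt | hlt
  · have : ((m:ℝ)+1) ≤ (m':ℝ) := by exact_mod_cast hlt
    calc min (((m:ℝ)+1) * 2 ^ k) (((m':ℝ)+1) * 2 ^ k) ≤ ((m:ℝ)+1) * 2 ^ k := min_le_left _ _
    _ ≤ (m':ℝ) * 2 ^ k := by nlinarith [two_zpow_pos k]
    _ ≤ _ := le_max_right _ _
  · have : ((m':ℝ)+1) ≤ (m:ℝ) := by exact_mod_cast hlt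
    calc min (((m:ℝ)+1) * 2 ^ k) (((m':ℝ)+1) * 2 ^ k) ≤ ((m':ℝ)+1) * 2 ^ k := min_le_right _ _
    _ ≤ (m:ℝ) * 2 ^ k := by nlinarith [two_zpow_pos k]
    _ ≤ _ := le_max_left _ _

lemma dyadicI_nest {l s : ℤ} (h : l ≤ s) (j i : ℤ) :
    dyadicI (l, j) ⊆ dyadicI (s, i) ∨ Disjoint (dyadicI (l, j)) (dyadicI (s, i)) := by
  set d : ℕ := (s - l).toNat with hd
  have hsd : s = l + d := by omega
  have h2 : (2:ℝ) ^ s = 2 ^ l * 2 ^ (d:ℕ) := by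
    rw [hsd, zpow_add₀ (two_ne_zero), zpow_natCast]
  have h2d : ((2^d : ℤ) : ℝ) = (2:ℝ) ^ (d:ℕ) := by push_cast; ring
  by_cases h1 : j < i * 2 ^ d
  · right
    rw [dyadicI, dyadicI, Set.Ico_disjoint_Ico]
    have : (j:ℝ) + 1 ≤ (i:ℝ) * 2 ^ (d:ℕ) := by
      have : j + 1 ≤ i * 2^d := h1
      calc (j:ℝ) + 1 = ((j+1 : ℤ) : ℝ) := by push_cast; ring
      _ ≤ ((i * 2^d : ℤ) : ℝ) := by exact_mod_cast this
      _ = (i:ℝ) * 2 ^ (d:ℕ) := by push_cast; ring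
    calc min (((j:ℝ)+1) * 2 ^ l) (((i:ℝ)+1) * 2 ^ s) ≤ ((j:ℝ)+1) * 2 ^ l := min_le_left _ _
    _ ≤ (i:ℝ) * 2 ^ s := by rw [h2]; nlinarith [two_zpow_pos l]
    _ ≤ _ := le_max_right _ _
  · by_cases h3 : (i+1) * 2 ^ d ≤ j
    · right
      rw [dyadicI, dyadicI, Set.Ico_disjoint_Ico]
      have : ((i:ℝ)+1) * 2 ^ (d:ℕ) ≤ (j:ℝ) := by
        calc ((i:ℝ)+1) * 2 ^ (d:ℕ) = (((i+1) * 2^d : ℤ) : ℝ) := by push_cast; ring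
        _ ≤ (j:ℝ) := by exact_mod_cast h3
      calc min (((j:ℝ)+1) * 2 ^ l) (((i:ℝ)+1) * 2 ^ s) ≤ ((i:ℝ)+1) * 2 ^ s := min_le_right _ _
      _ ≤ (j:ℝ) * 2 ^ l := by rw [h2]; nlinarith [two_zpow_pos l]
      _ ≤ _ := le_max_left _ _
    · left
      push_neg at h1 h3
      have hj1 : (i:ℝ) * 2 ^ (d:ℕ) ≤ (j:ℝ) := by
        calc (i:ℝ) * 2 ^ (d:ℕ) = ((i * 2^d : ℤ) : ℝ) := by push_cast; ring
        _ ≤ (j:ℝ) := by exact_mod_cast h1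
      have hj2 : (j:ℝ) + 1 ≤ ((i:ℝ)+1) * 2 ^ (d:ℕ) := by
        have : j + 1 ≤ (i+1) * 2^d := by omega
        calc (j:ℝ) + 1 = ((j+1 : ℤ) : ℝ) := by push_cast; ring
        _ ≤ (((i+1) * 2^d : ℤ) : ℝ) := by exact_mod_cast this
        _ = ((i:ℝ)+1) * 2 ^ (d:ℕ) := by push_cast; ring
      apply Set.Ico_subset_Ico
      · rw [h2]; nlinarith [two_zpow_pos l]
      · rw [h2]; nlinarith [two_zpow_pos l]

lemma zpow_split (k : ℤ) : (2:ℝ) ^ k = 2 ^ (k-1) * 2 := by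
  rw [← zpow_add_one₀ (two_ne_zero : (2:ℝ) ≠ 0)]; ring_nf

lemma dyadicI_child_left (p : ℤ × ℤ) : dyadicI (p.1 - 1, 2 * p.2) ⊆ dyadicI p := by
  simp only [dyadicI]
  apply Set.Ico_subset_Ico
  · rw [zpow_split p.1]; push_cast; ring_nf; nlinarith [two_zpow_pos (p.1-1)]
  · rw [zpow_split p.1]; push_cast; nlinarith [two_zpow_pos (p.1-1)]

lemma dyadicI_child_right (p : ℤ × ℤ) : dyadicI (p.1 - 1, 2 * p.2 + 1) ⊆ dyadicI p := by
  simp only [dyadicI]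
  apply Set.Ico_subset_Ico
  · rw [zpow_split p.1]; push_cast; nlinarith [two_zpow_pos (p.1-1)]
  · rw [zpow_split p.1]; push_cast; nlinarith [two_zpow_pos (p.1-1)]

lemma haar_support {p : ℤ × ℤ} {x : ℝ} (hx : x ∉ dyadicI p) : haar p x = 0 := by
  rw [haar]
  rw [Set.indicator_of_notMem (fun h => hx (dyadicI_child_left p h)),
      Set.indicator_of_notMem (fun h => hx (dyadicI_child_right p h))]
  ring

lemma dyadicI_disjoint' {p q : ℤ × ℤ} (hk : p.1 = q.1) (hm : p.2 ≠ q.2) :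
    Disjoint (dyadicI p) (dyadicI q) := by
  obtain ⟨k, m⟩ := p; obtain ⟨k', m'⟩ := q
  cases hk
  exact dyadicI_disjoint hm

lemma indicator_const_on {l s : ℤ} (h : l ≤ s) (j i : ℤ) :
    ∃ c : ℝ, ∀ x ∈ dyadicI (l, j), (dyadicI (s, i)).indicator (1 : ℝ → ℝ) x = c := by
  rcases dyadicI_nest h j i with hsub | hdis
  · exact ⟨1, fun x hx => Set.indicator_of_mem (hsub hx) 1⟩
  · exact ⟨0, fun x hx => Set.indicator_of_notMem (fun hx2 => (hdis.ne_of_mem hx hx2) rfl) 1⟩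

lemma haar_const_on {l : ℤ} {p : ℤ × ℤ} (h : l ≤ p.1 - 1) (j : ℤ) :
    ∃ c : ℝ, ∀ x ∈ dyadicI (l, j), haar p x = c := by
  obtain ⟨c0, hc0⟩ := indicator_const_on h j (2 * p.2)
  obtain ⟨c1, hc1⟩ := indicator_const_on h j (2 * p.2 + 1)
  exact ⟨(2 : ℝ) ^ (-(p.1 : ℝ) / 2) * (c0 - c1), fun x hx => by
    rw [haar, hc0 x hx, hc1 x hx]⟩

lemma integrable_indicator_dyadicI (p : ℤ × ℤ) :
    Integrable ((dyadicI p).indicator (1 : ℝ → ℝ)) := by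
  rw [integrable_indicator_iff (measurableSet_dyadicI p)]
  exact (integrableOn_const_iff (by simp)).2 (Or.inr (by rw [volume_dyadicI]; exact ENNReal.ofReal_lt_top))

lemma integral_indicator_dyadicI (p : ℤ × ℤ) :
    ∫ x, (dyadicI p).indicator (1 : ℝ → ℝ) x = (2:ℝ) ^ p.1 := by
  rw [integral_indicator_one (measurableSet_dyadicI p), measureReal_def, volume_dyadicI,
    ENNReal.toReal_ofReal (le_of_lt (two_zpow_pos p.1))]

lemma integrable_haar (p : ℤ × ℤ) : Integrable (haar p) := by
  unfold haar
  exact (((integrable_indicator_dyadicI _).sub (integrable_indicator_dyadicI _)).const_mul _)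

lemma measurable_haar (p : ℤ × ℤ) : Measurable (haar p) := by
  unfold haar
  exact (((measurable_one.indicator (measurableSet_dyadicI _)).sub
    (measurable_one.indicator (measurableSet_dyadicI _))).const_mul _)

lemma haar_abs_le (p : ℤ × ℤ) (x : ℝ) : ‖haar p x‖ ≤ (2 : ℝ) ^ (-(p.1 : ℝ) / 2) * 2 := by
  have h2 : (0:ℝ) < (2 : ℝ) ^ (-(p.1 : ℝ) / 2) := Real.rpow_pos_of_pos two_pos _
  rw [haar, Real.norm_eq_abs, abs_mul, abs_of_pos h2]
  have h3 : ∀ s : Set ℝ, |s.indicator (1 : ℝ → ℝ) x| ≤ 1 := by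
    intro s
    by_cases hx : x ∈ s
    · rw [Set.indicator_of_mem hx]; norm_num
    · rw [Set.indicator_of_notMem hx]; norm_num
  have h4 := (abs_sub ((dyadicI (p.1 - 1, 2 * p.2)).indicator (1:ℝ→ℝ) x)
    ((dyadicI (p.1 - 1, 2 * p.2 + 1)).indicator (1:ℝ→ℝ) x)).trans (add_le_add (h3 _) (h3 _))
  norm_num at h4
  exact mul_le_mul_of_nonneg_left h4 h2.le

lemma integrable_haar_mul (p q : ℤ × ℤ) : Integrable (fun x => haar p x * haar q x) := by
  refine (integrable_haar q).bdd_mul (measurable_haar p).aestronglyMeasurable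
    (Filter.Eventually.of_forall (fun x => haar_abs_le p x))

lemma integral_haar (p : ℤ × ℤ) : ∫ x, haar p x = 0 := by
  unfold haar
  rw [integral_const_mul, integral_sub (integrable_indicator_dyadicI _) (integrable_indicator_dyadicI _),
    integral_indicator_dyadicI, integral_indicator_dyadicI, sub_self, mul_zero]

lemma rpow_neg_half_sq (k : ℤ) :
    (2:ℝ) ^ (-(k : ℝ) / 2) * (2:ℝ) ^ (-(k : ℝ) / 2) = ((2:ℝ) ^ k)⁻¹ := by
  rw [← Real.rpow_add two_pos]
  have : -(k : ℝ) / 2 + -(k : ℝ) / 2 = ((-k : ℤ) : ℝ) := by push_cast; ring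
  rw [this, Real.rpow_intCast, zpow_neg]

lemma integral_haar_self (p : ℤ × ℤ) : ∫ x, haar p x * haar p x = 1 := by
  set A := dyadicI (p.1 - 1, 2 * p.2) with hA
  set B := dyadicI (p.1 - 1, 2 * p.2 + 1) with hB
  have hdis : Disjoint A B := dyadicI_disjoint (by omega)
  have hpt : ∀ x, haar p x * haar p x =
      ((2:ℝ) ^ (-(p.1 : ℝ) / 2) * (2:ℝ) ^ (-(p.1 : ℝ) / 2)) *
        (A.indicator (1:ℝ→ℝ) x + B.indicator (1:ℝ→ℝ) x) := by
    intro x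
    rw [haar]
    by_cases hxA : x ∈ A
    · have hxB : x ∉ B := fun hxB => (hdis.ne_of_mem hxA hxB) rfl
      rw [Set.indicator_of_mem hxA, Set.indicator_of_notMem hxB]; simp
    · by_cases hxB : x ∈ B
      · rw [Set.indicator_of_mem hxB, Set.indicator_of_notMem hxA]; simp
      · rw [Set.indicator_of_notMem hxA, Set.indicator_of_notMem hxB]; simp
  calc ∫ x, haar p x * haar p x
      = ∫ x, ((2:ℝ) ^ (-(p.1 : ℝ) / 2) * (2:ℝ) ^ (-(p.1 : ℝ) / 2)) *
        (A.indicator (1:ℝ→ℝ) x + B.indicator (1:ℝ→ℝ) x) := by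
        congr 1; funext x; exact hpt x
    _ = ((2:ℝ) ^ (-(p.1 : ℝ) / 2) * (2:ℝ) ^ (-(p.1 : ℝ) / 2)) *
        ((2:ℝ) ^ (p.1 - 1) + (2:ℝ) ^ (p.1 - 1)) := by
        rw [integral_const_mul, integral_add (integrable_indicator_dyadicI _)
          (integrable_indicator_dyadicI _), integral_indicator_dyadicI,
          integral_indicator_dyadicI]
    _ = 1 := by
        rw [rpow_neg_half_sq]
        have : (2:ℝ) ^ (p.1 - 1) + (2:ℝ) ^ (p.1 - 1) = 2 ^ p.1 := by
          rw [zpow_split p.1]; ring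
        rw [this]
        field_simp

lemma integral_haar_mul_of_lt {p q : ℤ × ℤ} (h : q.1 < p.1) :
    ∫ x, haar q x * haar p x = 0 := by
  obtain ⟨c, hc⟩ := haar_const_on (l := q.1) (p := p) (by omega) q.2
  have hpt : ∀ x, haar q x * haar p x = c * haar q x := by
    intro x
    by_cases hx : x ∈ dyadicI q
    · rw [hc x hx]; ring
    · rw [haar_support hx]; ring
  calc ∫ x, haar q x * haar p x = ∫ x, c * haar q x := by congr 1; funext x; exact hpt x
    _ = 0 := by rw [integral_const_mul, integral_haar, mul_zero]

lemma integral_haar_mul (p q : ℤ × ℤ) :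
    ∫ x, haar p x * haar q x = if p = q then 1 else 0 := by
  by_cases hpq : p = q
  · rw [if_pos hpq, hpq, integral_haar_self]
  · rw [if_neg hpq]
    rcases lt_trichotomy p.1 q.1 with h | h | h
    · exact integral_haar_mul_of_lt h
    · have hm : p.2 ≠ q.2 := fun h2 => hpq (Prod.ext h h2)
      have hdis := dyadicI_disjoint' h hm
      have hpt : ∀ x, haar p x * haar q x = 0 := by
        intro x
        by_cases hx : x ∈ dyadicI p
        · rw [haar_support (fun hx2 => (hdis.ne_of_mem hx hx2) rfl), mul_zero]
        · rw [haar_support hx, zero_mul]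
      calc ∫ x, haar p x * haar q x = ∫ x, (0:ℝ) := by congr 1; funext x; exact hpt x
        _ = 0 := integral_zero _ _
    · rw [show (fun x => haar p x * haar q x) = fun x => haar q x * haar p x by
        funext x; ring] at *
      exact integral_haar_mul_of_lt h

lemma integrable_haarR_mul (r r' : RectIx) :
    Integrable (fun z : ℝ × ℝ => haarR r z * haarR r' z) := by
  have : (fun z : ℝ × ℝ => haarR r z * haarR r' z) =
      fun z : ℝ × ℝ => (fun x => haar r.1 x * haar r'.1 x) z.1 *
        (fun y => haar r.2 y * haar r'.2 y) z.2 := by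
    funext z; simp only [haarR]; ring
  rw [this, Measure.volume_eq_prod]
  exact (integrable_haar_mul r.1 r'.1).mul_prod (integrable_haar_mul r.2 r'.2)

lemma integral_haarR_mul (r r' : RectIx) :
    ∫ z : ℝ × ℝ, haarR r z * haarR r' z = if r = r' then 1 else 0 := by
  have h1 : ∫ z : ℝ × ℝ, haarR r z * haarR r' z =
      ∫ z : ℝ × ℝ, (fun x => haar r.1 x * haar r'.1 x) z.1 *
        (fun y => haar r.2 y * haar r'.2 y) z.2 := by
    congr 1; funext z; simp only [haarR]; ring
  have h2 := integral_prod_mul (μ := (volume : Measure ℝ)) (ν := (volume : Measure ℝ))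
    (fun x => haar r.1 x * haar r'.1 x) (fun y => haar r.2 y * haar r'.2 y)
  rw [h1, Measure.volume_eq_prod, h2, integral_haar_mul, integral_haar_mul]
  by_cases h : r = r'
  · rw [if_pos h, if_pos (by rw [h]), if_pos (by rw [h]), mul_one]
  · rw [if_neg h]
    rcases not_and_or.mp (Prod.ext_iff.not.mp h) with h1 | h2
    · rw [if_neg h1, zero_mul]
    · rw [if_neg h2, mul_zero]

def exS (n : ℕ) : Finset RectIx :=
  ((Finset.Icc (1 - (n:ℤ)) 0) ×ˢ (Finset.Ico (0:ℤ) (2^n))) ×ˢ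
  ((Finset.Icc (1 - (n:ℤ)) 0) ×ˢ (Finset.Ico (0:ℤ) (2^n)))

lemma pow_toNat_le {n : ℕ} {k : ℤ} (h1 : -(n:ℤ) < k) (h2 : k ≤ 0) :
    (2:ℤ) ^ (-k).toNat ≤ 2 ^ n :=
  pow_le_pow_right₀ (by norm_num) (by omega)

lemma mem_exS_of_exCoef_ne_zero {n : ℕ} {r : RectIx} (h : exCoef n r ≠ 0) : r ∈ exS n := by
  rw [exCoef] at h
  split_ifs at h with hc
  · obtain ⟨h1, h2, h3, h4, h5, h6, h7, h8⟩ := hc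
    simp only [exS, Finset.mem_product, Finset.mem_Icc, Finset.mem_Ico]
    refine ⟨⟨⟨by omega, h2⟩, h3, lt_of_lt_of_le h4 (pow_toNat_le h1 h2)⟩,
      ⟨by omega, h6⟩, h7, lt_of_lt_of_le h8 (pow_toNat_le h5 h6)⟩
  · exact absurd rfl h

lemma exCoef_eq_zero {n : ℕ} {r : RectIx} (hr : r ∉ exS n) : exCoef n r = 0 := by
  by_contra h
  exact hr (mem_exS_of_exCoef_ne_zero h)

lemma exFun_eq (n : ℕ) (z : ℝ × ℝ) :
    exFun n z = ∑ r ∈ exS n, exCoef n r * haarR r z :=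
  tsum_eq_sum (fun r hr => by rw [exCoef_eq_zero hr, zero_mul])

lemma haarCoefR_exFun (n : ℕ) (r : RectIx) : haarCoefR (exFun n) r = exCoef n r := by
  rw [haarCoefR]
  calc ∫ z : ℝ × ℝ, exFun n z * haarR r z
      = ∫ z : ℝ × ℝ, ∑ r' ∈ exS n, exCoef n r' * (haarR r' z * haarR r z) := by
        congr 1; funext z; rw [exFun_eq, Finset.sum_mul]
        exact Finset.sum_congr rfl (fun r' _ => by ring)
    _ = ∑ r' ∈ exS n, ∫ z : ℝ × ℝ, exCoef n r' * (haarR r' z * haarR r z) :=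
        integral_finset_sum _ (fun r' _ => (integrable_haarR_mul r' r).const_mul _)
    _ = ∑ r' ∈ exS n, (if r' = r then exCoef n r' else 0) := by
        refine Finset.sum_congr rfl (fun r' _ => ?_)
        rw [integral_const_mul, integral_haarR_mul]
        by_cases h : r' = r
        · rw [if_pos h, if_pos h, mul_one]
        · rw [if_neg h, if_neg h, mul_zero]
    _ = exCoef n r := by
        rw [Finset.sum_ite_eq' (exS n) r (exCoef n)]
        by_cases h : r ∈ exS n
        · rw [if_pos h]
        · rw [if_neg h, exCoef_eq_zero h]

def exA (n : ℕ) (p : ℤ × ℤ) : ℝ :=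
  if -(n : ℤ) < p.1 ∧ p.1 ≤ 0 ∧ 0 ≤ p.2 ∧ p.2 < 2 ^ (-p.1).toNat then dlen p else 0

lemma rlen_nonneg (r : RectIx) : 0 ≤ rlen r :=
  mul_nonneg (two_zpow_pos _).le (two_zpow_pos _).le

lemma exCoef_sq (n : ℕ) (r : RectIx) : exCoef n r ^ 2 = exA n r.1 * exA n r.2 := by
  rw [exCoef, exA, exA]
  by_cases hA : -(n : ℤ) < r.1.1 ∧ r.1.1 ≤ 0 ∧ 0 ≤ r.1.2 ∧ r.1.2 < 2 ^ (-r.1.1).toNat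
  · by_cases hB : -(n : ℤ) < r.2.1 ∧ r.2.1 ≤ 0 ∧ 0 ≤ r.2.2 ∧ r.2.2 < 2 ^ (-r.2.1).toNat
    · rw [if_pos hA, if_pos hB,
        if_pos ⟨hA.1, hA.2.1, hA.2.2.1, hA.2.2.2, hB.1, hB.2.1, hB.2.2.1, hB.2.2.2⟩,
        Real.sq_sqrt (rlen_nonneg r), rlen]
    · rw [if_neg hB, if_neg (by tauto), mul_zero]; ring
  · rw [if_neg hA, if_neg (by tauto), zero_mul]; ring

def exs1 (n : ℕ) : Finset (ℤ × ℤ) := (Finset.Icc (1 - (n:ℤ)) 0) ×ˢ (Finset.Ico (0:ℤ) (2^n))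

lemma exS_eq (n : ℕ) : exS n = (exs1 n) ×ˢ (exs1 n) := rfl

lemma sum_exA_inner {n : ℕ} {k : ℤ} (hk1 : 1 - (n:ℤ) ≤ k) (hk2 : k ≤ 0) :
    ∑ m ∈ Finset.Ico (0:ℤ) (2^n), exA n (k, m) = 1 := by
  have hstep : ∀ m ∈ Finset.Ico (0:ℤ) (2^n), exA n (k, m) =
      if m ∈ Finset.Ico (0:ℤ) (2^(-k).toNat) then (2:ℝ)^k else 0 := by
    intro m _
    rw [exA]
    by_cases hm : 0 ≤ m ∧ m < 2 ^ (-k).toNat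
    · rw [if_pos ⟨by omega, hk2, hm.1, hm.2⟩, if_pos (Finset.mem_Ico.2 hm), dlen]
    · rw [if_neg (by tauto), if_neg (fun hc => hm (Finset.mem_Ico.1 hc))]
  rw [Finset.sum_congr rfl hstep, Finset.sum_ite_mem]
  have hsub : Finset.Ico (0:ℤ) (2^(-k).toNat) ⊆ Finset.Ico (0:ℤ) (2^n) := by
    apply Finset.Ico_subset_Ico le_rfl
    exact pow_le_pow_right₀ (by norm_num) (by omega)
  rw [Finset.inter_eq_right.2 hsub, Finset.sum_const, Int.card_Ico]
  have hcard : ((2:ℤ) ^ (-k).toNat - 0).toNat = 2 ^ (-k).toNat := by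
    rw [sub_zero]
    rw [show ((2:ℤ) ^ (-k).toNat) = (((2 ^ (-k).toNat : ℕ) : ℤ)) by push_cast; ring]
    exact Int.toNat_natCast _

  rw [hcard, nsmul_eq_mul]
  have h1 : ((2 ^ (-k).toNat : ℕ) : ℝ) = (2:ℝ) ^ (-k) := by
    push_cast
    rw [← zpow_natCast (2:ℝ) (-k).toNat, Int.toNat_of_nonneg (by omega)]
  rw [h1, ← zpow_add₀ (two_ne_zero : (2:ℝ) ≠ 0)]
  norm_num

lemma sum_exA (n : ℕ) : ∑ p ∈ exs1 n, exA n p = (n : ℝ) := by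
  rw [exs1, Finset.sum_product]
  rw [Finset.sum_congr rfl (fun k hk => sum_exA_inner (Finset.mem_Icc.1 hk).1 (Finset.mem_Icc.1 hk).2)]
  rw [Finset.sum_const, Int.card_Icc, nsmul_eq_mul, mul_one]
  congr 1
  omega

lemma sum_exS_coef_sq (n : ℕ) : ∑ r ∈ exS n, exCoef n r ^ 2 = (n:ℝ) ^ 2 := by
  rw [exS_eq, Finset.sum_product]
  calc ∑ p ∈ exs1 n, ∑ q ∈ exs1 n, exCoef n (p, q) ^ 2
      = ∑ p ∈ exs1 n, ∑ q ∈ exs1 n, exA n p * exA n q :=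
        Finset.sum_congr rfl (fun p _ => Finset.sum_congr rfl (fun q _ => exCoef_sq n (p, q)))
    _ = (∑ p ∈ exs1 n, exA n p) * (∑ q ∈ exs1 n, exA n q) := by rw [Finset.sum_mul_sum]
    _ = (n:ℝ) ^ 2 := by rw [sum_exA, sq]

lemma tsum_exCoef_sq (n : ℕ) : ∑' r : RectIx, exCoef n r ^ 2 = (n:ℝ) ^ 2 :=
  (tsum_eq_sum (fun r hr => by rw [exCoef_eq_zero hr]; ring)).trans (sum_exS_coef_sq n)

lemma dyadicI_subset_unit {k m : ℤ} (hk : k ≤ 0) (hm : 0 ≤ m) (hm2 : m < 2 ^ (-k).toNat) :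
    dyadicI (k, m) ⊆ Set.Ico (0:ℝ) 1 := by
  rw [dyadicI]
  apply Set.Ico_subset_Ico
  · positivity
  · have h1 : ((m:ℝ) + 1) ≤ (2:ℝ) ^ ((-k).toNat : ℕ) := by
      have : (m:ℤ) + 1 ≤ 2 ^ (-k).toNat := by omega
      calc ((m:ℝ) + 1) = (((m + 1 : ℤ)) : ℝ) := by push_cast; ring
        _ ≤ (((2 ^ (-k).toNat : ℤ)) : ℝ) := by exact_mod_cast this
        _ = (2:ℝ) ^ ((-k).toNat : ℕ) := by push_cast; ring
    have h2 : (2:ℝ) ^ ((-k).toNat : ℕ) = (2:ℝ) ^ (-k : ℤ) := by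
      rw [← zpow_natCast (2:ℝ) (-k).toNat, Int.toNat_of_nonneg (by omega)]
    calc ((m:ℝ) + 1) * 2 ^ k ≤ (2:ℝ) ^ (-k : ℤ) * 2 ^ k := by
          rw [← h2]; exact mul_le_mul_of_nonneg_right h1 (two_zpow_pos k).le
      _ = 1 := by rw [← zpow_add₀ (two_ne_zero : (2:ℝ) ≠ 0)]; norm_num

lemma dyadicR_subset_unit {n : ℕ} {r : RectIx} (h : exCoef n r ≠ 0) :
    dyadicR r ⊆ (Set.Ico (0:ℝ) 1) ×ˢ (Set.Ico (0:ℝ) 1) := by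
  rw [exCoef] at h
  split_ifs at h with hc
  · obtain ⟨h1, h2, h3, h4, h5, h6, h7, h8⟩ := hc
    exact Set.prod_mono (dyadicI_subset_unit h2 h3 h4) (dyadicI_subset_unit h6 h7 h8)
  · exact absurd rfl h

lemma measurableSet_dyadicR (r : RectIx) : MeasurableSet (dyadicR r) :=
  (measurableSet_dyadicI r.1).prod (measurableSet_dyadicI r.2)

lemma volume_dyadicR (r : RectIx) : volume (dyadicR r) = ENNReal.ofReal (rlen r) := by
  rw [dyadicR, Measure.volume_eq_prod, Measure.prod_prod, volume_dyadicI, volume_dyadicI,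
    ← ENNReal.ofReal_mul (two_zpow_pos r.1.1).le]
  rfl

lemma volume_dyadicR_toReal (r : RectIx) : (volume (dyadicR r)).toReal = rlen r := by
  rw [volume_dyadicR, ENNReal.toReal_ofReal (rlen_nonneg r)]

lemma dyadicR_disjoint {r r' : RectIx} (h1 : r.1.1 = r'.1.1) (h2 : r.2.1 = r'.2.1)
    (hne : r ≠ r') : Disjoint (dyadicR r) (dyadicR r') := by
  have : r.1.2 ≠ r'.1.2 ∨ r.2.2 ≠ r'.2.2 := by
    by_contra hc
    push_neg at hc
    exact hne (Prod.ext (Prod.ext h1 hc.1) (Prod.ext h2 hc.2))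
  rw [Set.disjoint_left]
  rintro ⟨x, y⟩ hz hz'
  rw [dyadicR, Set.mem_prod] at hz hz'
  rcases this with hm | hm
  · exact (dyadicI_disjoint' h1 hm).ne_of_mem hz.1 hz'.1 rfl
  · exact (dyadicI_disjoint' h2 hm).ne_of_mem hz.2 hz'.2 rfl

lemma exCoef_sq_of_ne_zero {n : ℕ} {r : RectIx} (h : exCoef n r ≠ 0) :
    exCoef n r ^ 2 = rlen r := by
  rw [exCoef] at h ⊢
  split_ifs at h ⊢ with hc
  · rw [Real.sq_sqrt (rlen_nonneg r)]
  · exact absurd rfl h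

def genG (n : ℕ) : Finset (ℤ × ℤ) := (Finset.Icc (1-(n:ℤ)) 0) ×ˢ (Finset.Icc (1-(n:ℤ)) 0)

lemma gen_mem_G {n : ℕ} {r : RectIx} (h : exCoef n r ≠ 0) : (r.1.1, r.2.1) ∈ genG n := by
  rw [exCoef] at h
  split_ifs at h with hc
  · obtain ⟨h1, h2, _, _, h5, h6, _, _⟩ := hc
    simp only [genG, Finset.mem_product, Finset.mem_Icc]
    omega
  · exact absurd rfl h

lemma card_genG (n : ℕ) : (genG n).card = n * n := by
  rw [genG, Finset.card_product, Int.card_Icc]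
  congr 1 <;> omega

lemma fiber_sum_le {Ω : Set (ℝ × ℝ)} (hΩ : volume Ω < ⊤)
    (t : Finset RectIx) (g : ℤ × ℤ)
    (ht : ∀ r ∈ t, (dyadicR r ⊆ Ω) ∧ (r.1.1, r.2.1) = g) :
    ∑ r ∈ t, rlen r ≤ (volume Ω).toReal := by
  have hd : (t : Set RectIx).PairwiseDisjoint dyadicR := by
    intro r hr r' hr' hne
    have g1 := (ht r hr).2
    have g2 := (ht r' hr').2
    exact dyadicR_disjoint (by rw [Prod.ext_iff] at g1 g2; omega)
      (by rw [Prod.ext_iff] at g1 g2; omega) hne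
  calc ∑ r ∈ t, rlen r = ∑ r ∈ t, (volume (dyadicR r)).toReal :=
        Finset.sum_congr rfl (fun r _ => (volume_dyadicR_toReal r).symm)
    _ = (∑ r ∈ t, volume (dyadicR r)).toReal :=
        (ENNReal.toReal_sum (fun r _ => by rw [volume_dyadicR]; exact ENNReal.ofReal_ne_top)).symm
    _ ≤ (volume Ω).toReal := by
        apply ENNReal.toReal_mono hΩ.ne
        rw [← measure_biUnion_finset hd (fun r _ => measurableSet_dyadicR r)]
        exact measure_mono (Set.iUnion₂_subset (fun r hr => (ht r hr).1))

lemma tsum_coef_le (n : ℕ) {Ω : Set (ℝ × ℝ)} (hΩ : volume Ω < ⊤) :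
    ∑' r : {r : RectIx // dyadicR r ⊆ Ω}, (haarCoefR (exFun n) r.1) ^ 2
      ≤ (n:ℝ) ^ 2 * (volume Ω).toReal := by
  have h1 : ∑' r : {r : RectIx // dyadicR r ⊆ Ω}, (haarCoefR (exFun n) r.1) ^ 2
      = ∑' r : RectIx, ({r : RectIx | dyadicR r ⊆ Ω}).indicator (fun r => exCoef n r ^ 2) r := by
    rw [← tsum_subtype]
    exact tsum_congr fun r => by rw [haarCoefR_exFun]
  rw [h1, tsum_eq_sum (s := exS n) (fun r hr => by
    rw [Set.indicator_apply]
    split_ifs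
    · rw [exCoef_eq_zero hr]; ring
    · rfl)]
  set T := (exS n).filter (fun r => dyadicR r ⊆ Ω ∧ exCoef n r ≠ 0) with hT
  have h2 : ∑ r ∈ exS n, ({r : RectIx | dyadicR r ⊆ Ω}).indicator (fun r => exCoef n r ^ 2) r
      = ∑ r ∈ T, rlen r := by
    rw [hT, Finset.sum_filter]
    refine Finset.sum_congr rfl (fun r _ => ?_)
    rw [Set.indicator_apply]
    simp only [Set.mem_setOf_eq]
    by_cases hsub : dyadicR r ⊆ Ω
    · by_cases hz : exCoef n r = 0
      · rw [if_pos hsub, if_neg (by tauto), hz]; ring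
      · rw [if_pos hsub, if_pos ⟨hsub, hz⟩, exCoef_sq_of_ne_zero hz]
    · rw [if_neg hsub, if_neg (by tauto)]
  rw [h2]
  have hmap : ∀ r ∈ T, (r.1.1, r.2.1) ∈ genG n := by
    intro r hr
    rw [hT, Finset.mem_filter] at hr
    exact gen_mem_G hr.2.2
  rw [← Finset.sum_fiberwise_of_maps_to hmap (fun r => rlen r)]
  calc ∑ g ∈ genG n, ∑ r ∈ T.filter (fun r => (r.1.1, r.2.1) = g), rlen r
      ≤ ∑ g ∈ genG n, (volume Ω).toReal := by
        refine Finset.sum_le_sum (fun g _ => ?_)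
        refine fiber_sum_le hΩ _ g (fun r hr => ?_)
        rw [Finset.mem_filter] at hr
        have := hr.1
        rw [hT, Finset.mem_filter] at this
        exact ⟨this.2.1, hr.2⟩
    _ = (n:ℝ) ^ 2 * (volume Ω).toReal := by
        rw [Finset.sum_const, card_genG, nsmul_eq_mul]
        push_cast
        ring

lemma tsum_coef_unit (n : ℕ) {Ω : Set (ℝ × ℝ)}
    (hΩ : (Set.Ico (0:ℝ) 1) ×ˢ (Set.Ico (0:ℝ) 1) ⊆ Ω) :
    ∑' r : {r : RectIx // dyadicR r ⊆ Ω}, (haarCoefR (exFun n) r.1) ^ 2 = (n:ℝ) ^ 2 := by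
  have h1 : ∑' r : {r : RectIx // dyadicR r ⊆ Ω}, (haarCoefR (exFun n) r.1) ^ 2
      = ∑' r : ({r : RectIx | dyadicR r ⊆ Ω} : Set RectIx), (fun r => exCoef n r ^ 2) r.1 :=
    tsum_congr fun r => by rw [haarCoefR_exFun]
  have hsupp : Function.support (fun r : RectIx => exCoef n r ^ 2) ⊆
      {r : RectIx | dyadicR r ⊆ Ω} := by
    intro r hr
    have hne : exCoef n r ≠ 0 := by
      intro h
      rw [Function.mem_support] at hr
      exact hr (by rw [h]; ring)
    exact (dyadicR_subset_unit hne).trans hΩ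
  have h2 := tsum_subtype_eq_of_support_subset hsupp
  rw [h1, h2, tsum_exCoef_sq]

lemma volume_unit_sq : volume ((Set.Ico (0:ℝ) 1) ×ˢ (Set.Ico (0:ℝ) 1)) = 1 := by
  rw [Measure.volume_eq_prod, Measure.prod_prod, Real.volume_Ico]
  norm_num


/-- For `n` a power of `2`, the example function `g'` has dyadic product
BMO norm exactly `n`; in particular for the unit square `Ω`,
`(|Ω|⁻¹ Σ_{R⊆Ω} (g'_R)²)^{1/2} = n`. -/
theorem example_bmo_norm (n : ℕ) (hn : ∃ m : ℕ, n = 2 ^ m) :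
    bmoProd (exFun n) = n ∧
    Real.sqrt ((volume ((Set.Ico (0:ℝ) 1) ×ˢ (Set.Ico (0:ℝ) 1))).toReal⁻¹ *
        ∑' r : {r : RectIx // dyadicR r ⊆ (Set.Ico (0:ℝ) 1) ×ˢ (Set.Ico (0:ℝ) 1)},
          (haarCoefR (exFun n) r.1) ^ 2) = n := by
  have hn1 : (1:ℝ) ≤ n := by
    obtain ⟨m, rfl⟩ := hn
    exact_mod_cast Nat.one_le_two_pow
  have hpart2 : Real.sqrt ((volume ((Set.Ico (0:ℝ) 1) ×ˢ (Set.Ico (0:ℝ) 1))).toReal⁻¹ *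
      ∑' r : {r : RectIx // dyadicR r ⊆ (Set.Ico (0:ℝ) 1) ×ˢ (Set.Ico (0:ℝ) 1)},
        (haarCoefR (exFun n) r.1) ^ 2) = n := by
    rw [tsum_coef_unit n subset_rfl, volume_unit_sq]
    simp only [ENNReal.toReal_one, inv_one, one_mul]
    exact Real.sqrt_sq (Nat.cast_nonneg n)
  refine ⟨?_, hpart2⟩
  -- the sup
  have hb : ∀ Ω : {Ω : Set (ℝ × ℝ) // IsOpen Ω ∧ 0 < volume Ω ∧ volume Ω < ⊤},
      Real.sqrt ((volume Ω.1).toReal⁻¹ *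
        ∑' r : {r : RectIx // dyadicR r ⊆ Ω.1}, (haarCoefR (exFun n) r.1) ^ 2) ≤ n := by
    rintro ⟨Ω, hO, h0, htop⟩
    have hpos : 0 < (volume Ω).toReal := ENNReal.toReal_pos h0.ne' htop.ne
    have hle := tsum_coef_le n htop
    have hmul : (volume Ω).toReal⁻¹ *
        (∑' r : {r : RectIx // dyadicR r ⊆ Ω}, (haarCoefR (exFun n) r.1) ^ 2) ≤ (n:ℝ) ^ 2 := by
      rw [inv_mul_le_iff₀ hpos]
      calc (∑' r : {r : RectIx // dyadicR r ⊆ Ω}, (haarCoefR (exFun n) r.1) ^ 2)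
          ≤ (n:ℝ) ^ 2 * (volume Ω).toReal := hle
        _ = (volume Ω).toReal * (n:ℝ) ^ 2 := by ring
    calc Real.sqrt ((volume Ω).toReal⁻¹ *
        ∑' r : {r : RectIx // dyadicR r ⊆ Ω}, (haarCoefR (exFun n) r.1) ^ 2)
        ≤ Real.sqrt ((n:ℝ) ^ 2) := Real.sqrt_le_sqrt hmul
      _ = n := Real.sqrt_sq (Nat.cast_nonneg n)
  have hbdd : BddAbove (Set.range (fun Ω : {Ω : Set (ℝ × ℝ) // IsOpen Ω ∧ 0 < volume Ω ∧ volume Ω < ⊤} =>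
      Real.sqrt ((volume Ω.1).toReal⁻¹ *
        ∑' r : {r : RectIx // dyadicR r ⊆ Ω.1}, (haarCoefR (exFun n) r.1) ^ 2))) := by
    refine ⟨n, ?_⟩
    rintro x ⟨Ω, rfl⟩
    exact hb Ω
  have hne : Nonempty {Ω : Set (ℝ × ℝ) // IsOpen Ω ∧ 0 < volume Ω ∧ volume Ω < ⊤} := by
    refine ⟨⟨(Set.Ioo (0:ℝ) 1) ×ˢ (Set.Ioo (0:ℝ) 1), isOpen_Ioo.prod isOpen_Ioo, ?_, ?_⟩⟩
    · rw [Measure.volume_eq_prod, Measure.prod_prod, Real.volume_Ioo]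
      norm_num
    · rw [Measure.volume_eq_prod, Measure.prod_prod, Real.volume_Ioo]
      norm_num
  apply le_antisymm
  · exact ciSup_le hb
  · apply le_of_forall_sub_le
    intro ε hε
    set δ : ℝ := ε / n with hδdef
    have hδ : 0 < δ := div_pos hε (by linarith)
    set Ω : Set (ℝ × ℝ) := (Set.Ioo (-δ) 1) ×ˢ (Set.Ioo (-δ) 1) with hΩdef
    have hOopen : IsOpen Ω := isOpen_Ioo.prod isOpen_Ioo
    have hvol : volume Ω = ENNReal.ofReal (1 + δ) * ENNReal.ofReal (1 + δ) := by
      rw [hΩdef, Measure.volume_eq_prod, Measure.prod_prod, Real.volume_Ioo]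
      norm_num
    have hvolR : (volume Ω).toReal = (1 + δ) * (1 + δ) := by
      rw [hvol, ENNReal.toReal_mul, ENNReal.toReal_ofReal (by linarith)]
    have h0 : 0 < volume Ω := by
      rw [hvol]
      exact ENNReal.mul_pos (ENNReal.ofReal_pos.2 (by linarith)).ne'
        (ENNReal.ofReal_pos.2 (by linarith)).ne'
    have htop : volume Ω < ⊤ := by
      rw [hvol]
      exact ENNReal.mul_lt_top ENNReal.ofReal_lt_top ENNReal.ofReal_lt_top
    have hsub : (Set.Ico (0:ℝ) 1) ×ˢ (Set.Ico (0:ℝ) 1) ⊆ Ω := by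
      refine Set.prod_mono ?_ ?_ <;>
        exact fun x hx => ⟨lt_of_lt_of_le (neg_lt_zero.2 hδ) hx.1, hx.2⟩
    have hval : Real.sqrt ((volume Ω).toReal⁻¹ *
        ∑' r : {r : RectIx // dyadicR r ⊆ Ω}, (haarCoefR (exFun n) r.1) ^ 2)
        = (n:ℝ) / (1 + δ) := by
      rw [tsum_coef_unit n hsub, hvolR]
      have : ((1 + δ) * (1 + δ))⁻¹ * (n:ℝ) ^ 2 = ((n:ℝ) / (1 + δ)) ^ 2 := by
        field_simp
      rw [this, Real.sqrt_sq (by positivity)]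
    have hle2 : (n:ℝ) / (1 + δ) ≤ bmoProd (exFun n) := by
      rw [bmoProd, ← hval]
      exact le_ciSup hbdd ⟨Ω, hOopen, h0, htop⟩
    have harith : (n:ℝ) - ε ≤ (n:ℝ) / (1 + δ) := by
      rw [le_div_iff₀ (by linarith)]
      have hne0 : (n:ℝ) ≠ 0 := by linarith
      rw [hδdef]
      field_simp
      nlinarith
    linarith


end
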